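/- Let M ∈ ℕ, δ > 0, C₁, C₂, C₃ ≥ 0, λ₀ ∈ ℝ, and let f : ℝ → (Fin M → ℝ) → ℝ be such that for every z ∈ [-1,1]^M, t ↦ f t z is three times differentiable on (-δ, δ) with |∂ₜ f t z| ≤ C₁, |∂ₜ² f t z| ≤ C₂, |∂ₜ³ f t z| ≤ C₃ there, f 0 z = λ₀, ∂ₜ f 0 z = L z for a fixed linear functional L, and ∂ₜ² f 0 z = q z z for a fixed bilinear form q : (Fin M → ℝ) → (Fin M → ℝ) → ℝ. Let Z be a random vector valued almost surely in [-1,1]^M with 𝔼[Z] = 0 and vanishing third moments, i.e., 𝔼[Z_i Z_j Z_k] = 0 for all i, j, k, and ω ↦ f t (Z ω) measurable for each t. Then there exists a constant C'' ≥ 0 such that for all |t| < δ: |Var[f t Z] − t² * Var[L Z]| ≤ C'' * t⁴. -/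

import Mathlib

open MeasureTheory

private lemma abs_le_of_mem_uIcc {s t : ℝ} (hs : s ∈ Set.uIcc 0 t) : |s| ≤ |t| := by
  rcases le_total 0 t with h | h
  · rw [Set.uIcc_of_le h] at hs
    rw [abs_of_nonneg hs.1, abs_of_nonneg h]; exact hs.2
  · rw [Set.uIcc_of_ge h] at hs
    rw [abs_of_nonpos hs.2, abs_of_nonpos h]; linarith [hs.1]

private lemma step_bound {δ B : ℝ} {g g' : ℝ → ℝ}
    (hd : ∀ s ∈ Set.Ioo (-δ) δ, HasDerivAt g (g' s) s)
    (h0 : g 0 = 0) {t : ℝ} (ht : |t| < δ)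
    (hB : ∀ s ∈ Set.uIcc 0 t, |g' s| ≤ B) : |g t| ≤ B * |t| := by
  have hsub : Set.uIcc 0 t ⊆ Set.Ioo (-δ) δ := by
    intro s hs
    have h1 := abs_le_of_mem_uIcc hs
    constructor
    · nlinarith [neg_abs_le s]
    · nlinarith [le_abs_self s]
  have := Convex.norm_image_sub_le_of_norm_hasDerivWithin_le
    (f := g) (f' := g') (s := Set.uIcc 0 t)
    (fun s hs => (hd s (hsub hs)).hasDerivWithinAt)
    (fun s hs => by simpa using hB s hs) (convex_uIcc 0 t)
    Set.left_mem_uIcc Set.right_mem_uIcc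
  simpa [h0, Real.norm_eq_abs] using this

private lemma taylor3 {δ C₃ : ℝ} {g g' g'' g''' : ℝ → ℝ}
    (hd1 : ∀ s ∈ Set.Ioo (-δ) δ, HasDerivAt g (g' s) s)
    (hd2 : ∀ s ∈ Set.Ioo (-δ) δ, HasDerivAt g' (g'' s) s)
    (hd3 : ∀ s ∈ Set.Ioo (-δ) δ, HasDerivAt g'' (g''' s) s)
    (hb : ∀ s ∈ Set.Ioo (-δ) δ, |g''' s| ≤ C₃)
    (h0 : g 0 = 0) (h0' : g' 0 = 0) (h0'' : g'' 0 = 0)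
    (hC : 0 ≤ C₃) {t : ℝ} (ht : |t| < δ) : |g t| ≤ C₃ * |t| ^ 3 := by
  have H2 : ∀ s : ℝ, |s| < δ → |g'' s| ≤ C₃ * |s| := by
    intro s hs
    refine step_bound hd3 h0'' hs (fun r hr => hb r ?_)
    have h1 := abs_le_of_mem_uIcc hr
    constructor
    · nlinarith [neg_abs_le r]
    · nlinarith [le_abs_self r]
  have H1 : ∀ s : ℝ, |s| < δ → |g' s| ≤ C₃ * |s| ^ 2 := by
    intro s hs
    have := step_bound hd2 h0' hs (B := C₃ * |s|) (fun r hr => by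
      have h1 := abs_le_of_mem_uIcc hr
      have h2 : |r| < δ := lt_of_le_of_lt h1 hs
      calc |g'' r| ≤ C₃ * |r| := H2 r h2
        _ ≤ C₃ * |s| := mul_le_mul_of_nonneg_left h1 hC)
    calc |g' s| ≤ C₃ * |s| * |s| := this
      _ = C₃ * |s| ^ 2 := by ring
  have := step_bound hd1 h0 ht (B := C₃ * |t| ^ 2) (fun r hr => by
    have h1 := abs_le_of_mem_uIcc hr
    have h2 : |r| < δ := lt_of_le_of_lt h1 ht
    calc |g' r| ≤ C₃ * |r| ^ 2 := H1 r h2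
      _ ≤ C₃ * |t| ^ 2 := mul_le_mul_of_nonneg_left
        (pow_le_pow_left₀ (abs_nonneg r) h1 2) hC)
  calc |g t| ≤ C₃ * |t| ^ 2 * |t| := this
    _ = C₃ * |t| ^ 3 := by ring

/-- Sharpened perturbation approximation of the variance: if in addition the third
`t`-derivative is bounded, the second `t`-derivative at `0` is a quadratic form `q z z`
in `z`, and all third moments of the centered box-valued random parameter `Z` vanish,
then `Var[f t Z] = t² Var[L Z] + O(t⁴)`. -/
theorem variance_perturbation_fourth_order
    {Ω : Type*} [MeasurableSpace Ω] (P : Measure Ω) [IsProbabilityMeasure P]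
    (M : ℕ) (δ C₁ C₂ C₃ : ℝ) (hδ : 0 < δ) (hC₁ : 0 ≤ C₁) (hC₂ : 0 ≤ C₂) (hC₃ : 0 ≤ C₃)
    (lam0 : ℝ)
    (f f' f'' f''' : ℝ → (Fin M → ℝ) → ℝ)
    (L : (Fin M → ℝ) →ₗ[ℝ] ℝ)
    (q : (Fin M → ℝ) →ₗ[ℝ] (Fin M → ℝ) →ₗ[ℝ] ℝ)
    (hf : ∀ z : Fin M → ℝ, (∀ i, z i ∈ Set.Icc (-1 : ℝ) 1) →
      ∀ t ∈ Set.Ioo (-δ) δ,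
        HasDerivAt (fun s => f s z) (f' t z) t ∧
        HasDerivAt (fun s => f' s z) (f'' t z) t ∧
        HasDerivAt (fun s => f'' s z) (f''' t z) t ∧
        |f' t z| ≤ C₁ ∧ |f'' t z| ≤ C₂ ∧ |f''' t z| ≤ C₃)
    (hf0 : ∀ z : Fin M → ℝ, (∀ i, z i ∈ Set.Icc (-1 : ℝ) 1) → f 0 z = lam0)
    (hf'0 : ∀ z : Fin M → ℝ, (∀ i, z i ∈ Set.Icc (-1 : ℝ) 1) → f' 0 z = L z)
    (hf''0 : ∀ z : Fin M → ℝ, (∀ i, z i ∈ Set.Icc (-1 : ℝ) 1) → f'' 0 z = q z z)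
    (Z : Ω → Fin M → ℝ) (hZmeas : Measurable Z)
    (hZbox : ∀ᵐ ω ∂P, ∀ i, Z ω i ∈ Set.Icc (-1 : ℝ) 1)
    (hZmean : ∫ ω, Z ω ∂P = 0)
    (hZthird : ∀ i j k : Fin M, ∫ ω, Z ω i * Z ω j * Z ω k ∂P = 0)
    (hmeas : ∀ t : ℝ, Measurable fun ω => f t (Z ω)) :
    ∃ C'' : ℝ, 0 ≤ C'' ∧ ∀ t : ℝ, |t| < δ →
      |((∫ ω, (f t (Z ω)) ^ 2 ∂P) - (∫ ω, f t (Z ω) ∂P) ^ 2)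
          - t ^ 2 * ((∫ ω, (L (Z ω)) ^ 2 ∂P) - (∫ ω, L (Z ω) ∂P) ^ 2)|
        ≤ C'' * t ^ 4 := by
  classical
  -- basis vectors
  set e : Fin M → (Fin M → ℝ) := fun i => fun j => if i = j then 1 else 0 with he
  have hgen : ∀ (w : (Fin M → ℝ) →ₗ[ℝ] ℝ) (z : Fin M → ℝ),
      w z = ∑ i, z i * w (e i) := by
    intro w z
    conv_lhs => rw [pi_eq_sum_univ z]
    rw [map_sum]
    simp [he, smul_eq_mul]
  have hQexp : ∀ z : Fin M → ℝ, q z z = ∑ j, ∑ i, z j * (z i * q (e i) (e j)) := by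
    intro z
    have h1 : q z z = ∑ j, z j * q z (e j) := by
      have := hgen (q z) z
      simpa using this
    rw [h1]
    refine Finset.sum_congr rfl fun j _ => ?_
    have h2 : q z (e j) = ∑ i, z i * q (e i) (e j) := by
      have := hgen (q.flip (e j)) z
      simpa using this
    rw [h2, Finset.mul_sum]
  -- basic measurability / bounds
  have hZi : ∀ i, Measurable fun ω => Z ω i := fun i => (measurable_pi_apply i).comp hZmeas
  have hZi_bd : ∀ᵐ ω ∂P, ∀ i, |Z ω i| ≤ 1 :=
    hZbox.mono fun ω h i => abs_le.2 ⟨(h i).1, (h i).2⟩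
  have hA_meas : Measurable fun ω => L (Z ω) := by
    have : (fun ω => L (Z ω)) = fun ω => ∑ i, Z ω i * L (e i) :=
      funext fun ω => hgen L (Z ω)
    rw [this]
    exact Finset.measurable_sum _ fun i _ => (hZi i).mul_const _
  have hQ_meas : Measurable fun ω => q (Z ω) (Z ω) := by
    have : (fun ω => q (Z ω) (Z ω))
        = fun ω => ∑ j, ∑ i, Z ω j * (Z ω i * q (e i) (e j)) :=
      funext fun ω => hQexp (Z ω)
    rw [this]
    refine Finset.measurable_sum _ fun j _ => Finset.measurable_sum _ fun i _ => ?_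
    exact (hZi j).mul ((hZi i).mul_const _)
  have hzero_mem : (0 : ℝ) ∈ Set.Ioo (-δ) δ := ⟨by linarith, hδ⟩
  have hA_bd : ∀ᵐ ω ∂P, |L (Z ω)| ≤ C₁ := by
    refine hZbox.mono fun ω h => ?_
    have H := (hf (Z ω) h 0 hzero_mem).2.2.2.1
    rwa [hf'0 (Z ω) h] at H
  have hQ_bd : ∀ᵐ ω ∂P, |q (Z ω) (Z ω)| ≤ C₂ := by
    refine hZbox.mono fun ω h => ?_
    have H := (hf (Z ω) h 0 hzero_mem).2.2.2.2.1
    rwa [hf''0 (Z ω) h] at H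
  -- integrability helper
  have intb : ∀ (g : Ω → ℝ) (B : ℝ), Measurable g → (∀ᵐ ω ∂P, |g ω| ≤ B) →
      Integrable g P := by
    intro g B hm hb
    exact (integrable_const B).mono' hm.aestronglyMeasurable
      (hb.mono fun ω h => by simpa using h)
  have intA : Integrable (fun ω => L (Z ω)) P := intb _ C₁ hA_meas hA_bd
  have intQ : Integrable (fun ω => q (Z ω) (Z ω)) P := intb _ C₂ hQ_meas hQ_bd
  have intZijk : ∀ i j k : Fin M, Integrable (fun ω => Z ω i * Z ω j * Z ω k) P := by
    intro i j k
    refine intb _ 1 (((hZi i).mul (hZi j)).mul (hZi k)) (hZi_bd.mono fun ω h => ?_)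
    have := h i; have := h j; have := h k
    calc |Z ω i * Z ω j * Z ω k| = |Z ω i| * |Z ω j| * |Z ω k| := by
          rw [abs_mul, abs_mul]
      _ ≤ 1 := mul_le_one₀ (mul_le_one₀ (h i) (abs_nonneg _) (h j)) (abs_nonneg _) (h k)
  -- Z itself is integrable (pi-valued)
  have intZ : Integrable Z P := by
    refine (integrable_const (1 : ℝ)).mono' hZmeas.aestronglyMeasurable
      (hZi_bd.mono fun ω h => ?_)
    exact pi_norm_le_iff_of_nonneg zero_le_one |>.2 fun i => by
      simpa [Real.norm_eq_abs] using h i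
  have EZi : ∀ i, ∫ ω, Z ω i ∂P = 0 := by
    intro i
    have := (ContinuousLinearMap.proj (R := ℝ) (φ := fun _ : Fin M => ℝ) i).integral_comp_comm intZ
    simp only [ContinuousLinearMap.proj_apply] at this
    rw [this, hZmean]
    simp
  have intZi : ∀ i, Integrable (fun ω => Z ω i) P := by
    intro i
    exact intb _ 1 (hZi i) (hZi_bd.mono fun ω h => h i)
  -- first moment of L Z is zero
  have EA0 : ∫ ω, L (Z ω) ∂P = 0 := by
    have h1 : (fun ω => L (Z ω)) = fun ω => ∑ i, Z ω i * L (e i) :=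
      funext fun ω => hgen L (Z ω)
    rw [h1, integral_finset_sum _ (fun i _ => (intZi i).mul_const _)]
    refine Finset.sum_eq_zero fun i _ => ?_
    rw [integral_mul_const, EZi i, zero_mul]
  -- third moments: E[(L Z) * (q Z Z)] = 0
  have EAQ0 : ∫ ω, L (Z ω) * q (Z ω) (Z ω) ∂P = 0 := by
    have h1 : (fun ω => L (Z ω) * q (Z ω) (Z ω))
        = fun ω => ∑ k, ∑ j, ∑ i,
            (L (e k) * q (e i) (e j)) * (Z ω i * Z ω j * Z ω k) := by
      funext ω
      rw [hgen L (Z ω), hQexp (Z ω), Finset.sum_mul_sum]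
      refine Finset.sum_congr rfl fun k _ => Finset.sum_congr rfl fun j _ => ?_
      rw [Finset.mul_sum]
      exact Finset.sum_congr rfl fun i _ => by ring
    rw [h1]
    rw [integral_finset_sum _ (fun k _ => ?_)]
    · refine Finset.sum_eq_zero fun k _ => ?_
      rw [integral_finset_sum _ (fun j _ => ?_)]
      · refine Finset.sum_eq_zero fun j _ => ?_
        rw [integral_finset_sum _ (fun i _ => ?_)]
        · refine Finset.sum_eq_zero fun i _ => ?_
          rw [integral_const_mul, hZthird i j k, mul_zero]
        · exact (intZijk i j k).const_mul _
      · exact integrable_finset_sum _ fun i _ => (intZijk i j k).const_mul _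
    · exact integrable_finset_sum _ fun j _ =>
        integrable_finset_sum _ fun i _ => (intZijk i j k).const_mul _
  -- the constant
  refine ⟨2 * C₁ * C₃ + 2 * (C₂ / 2 + C₃ * δ) ^ 2, by positivity, ?_⟩
  intro t ht
  -- Taylor remainder
  set Rb : Ω → ℝ := fun ω =>
    f t (Z ω) - lam0 - t * L (Z ω) - t ^ 2 * (q (Z ω) (Z ω) / 2) with hRb_def
  have hRb_bd : ∀ᵐ ω ∂P, |Rb ω| ≤ C₃ * |t| ^ 3 := by
    refine hZbox.mono fun ω hb => ?_
    set z := Z ω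
    have hd1 : ∀ s ∈ Set.Ioo (-δ) δ,
        HasDerivAt (fun s => f s z - lam0 - s * L z - s ^ 2 * (q z z / 2))
          (f' s z - L z - s * q z z) s := by
      intro s hs
      have h1 := (hf z hb s hs).1
      have h2 : HasDerivAt (fun s : ℝ => s * L z) (L z) s := hasDerivAt_mul_const _
      have h3 : HasDerivAt (fun s : ℝ => s ^ 2 * (q z z / 2)) (s * q z z) s := by
        have := (hasDerivAt_pow 2 s).mul_const (q z z / 2)
        refine this.congr_deriv ?_
        push_cast
        ring
      exact ((h1.sub_const lam0).sub h2).sub h3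
    have hd2 : ∀ s ∈ Set.Ioo (-δ) δ,
        HasDerivAt (fun s => f' s z - L z - s * q z z) (f'' s z - q z z) s := by
      intro s hs
      exact ((hf z hb s hs).2.1.sub_const _).sub (hasDerivAt_mul_const _)
    have hd3 : ∀ s ∈ Set.Ioo (-δ) δ,
        HasDerivAt (fun s => f'' s z - q z z) (f''' s z) s := by
      intro s hs
      exact (hf z hb s hs).2.2.1.sub_const _
    have hbd : ∀ s ∈ Set.Ioo (-δ) δ, |f''' s z| ≤ C₃ := fun s hs =>
      (hf z hb s hs).2.2.2.2.2
    have h0 : f 0 z - lam0 - 0 * L z - 0 ^ 2 * (q z z / 2) = 0 := by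
      rw [hf0 z hb]; ring
    have h0' : f' 0 z - L z - 0 * q z z = 0 := by
      rw [hf'0 z hb]; ring
    have h0'' : f'' 0 z - q z z = 0 := by
      rw [hf''0 z hb]; ring
    exact taylor3 hd1 hd2 hd3 hbd h0 h0' h0'' hC₃ ht
  have hRb_meas : Measurable Rb := by
    apply Measurable.sub
    apply Measurable.sub
    apply Measurable.sub (hmeas t) measurable_const
    · exact hA_meas.const_mul t
    · exact (hQ_meas.div_const 2).const_mul (t ^ 2)
  -- h := f t Z - (lam0 + t * L Z)
  set h : Ω → ℝ := fun ω => f t (Z ω) - (lam0 + t * L (Z ω)) with hh_def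
  have hh_meas : Measurable h :=
    (hmeas t).sub (measurable_const.add (hA_meas.const_mul t))
  set B' : ℝ := (C₂ / 2 + C₃ * δ) * t ^ 2 with hB'
  have hB'nn : 0 ≤ B' := by positivity
  have habs_t3 : C₃ * |t| ^ 3 ≤ C₃ * δ * t ^ 2 := by
    have h1 : |t| ^ 3 = |t| * t ^ 2 := by
      rw [← sq_abs]; ring
    rw [h1]
    have h2 : |t| * t ^ 2 ≤ δ * t ^ 2 := mul_le_mul_of_nonneg_right ht.le (sq_nonneg t)
    nlinarith [mul_le_mul_of_nonneg_left h2 hC₃]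
  have hh_bd : ∀ᵐ ω ∂P, |h ω| ≤ B' := by
    filter_upwards [hRb_bd, hQ_bd] with ω h1 h2
    have hrepr : h ω = Rb ω + t ^ 2 * (q (Z ω) (Z ω) / 2) := by
      rw [hh_def, hRb_def]; ring
    rw [hrepr]
    calc |Rb ω + t ^ 2 * (q (Z ω) (Z ω) / 2)|
        ≤ |Rb ω| + |t ^ 2 * (q (Z ω) (Z ω) / 2)| := abs_add_le _ _
      _ ≤ C₃ * |t| ^ 3 + t ^ 2 / 2 * C₂ := by
          refine add_le_add h1 ?_
          rw [abs_mul, abs_div]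
          rw [abs_of_nonneg (sq_nonneg t), abs_of_nonneg (by norm_num : (0:ℝ) ≤ 2)]
          calc t ^ 2 * (|q (Z ω) (Z ω)| / 2) ≤ t ^ 2 * (C₂ / 2) := by
                nlinarith [sq_nonneg t]
            _ = t ^ 2 / 2 * C₂ := by ring
      _ ≤ B' := by rw [hB']; nlinarith [sq_nonneg t]
  -- integrabilities
  have int_h : Integrable h P := intb _ B' hh_meas hh_bd
  have int_h2 : Integrable (fun ω => h ω ^ 2) P := by
    refine intb _ (B' ^ 2) (hh_meas.pow_const 2) (hh_bd.mono fun ω hω => ?_)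
    rw [abs_pow]
    exact pow_le_pow_left₀ (abs_nonneg _) hω 2
  have int_A2 : Integrable (fun ω => (L (Z ω)) ^ 2) P := by
    refine intb _ (C₁ ^ 2) (hA_meas.pow_const 2) (hA_bd.mono fun ω hω => ?_)
    rw [abs_pow]
    exact pow_le_pow_left₀ (abs_nonneg _) hω 2
  have int_Ah : Integrable (fun ω => L (Z ω) * h ω) P := by
    refine intb _ (C₁ * B') (hA_meas.mul hh_meas) ?_
    filter_upwards [hA_bd, hh_bd] with ω h1 h2
    rw [abs_mul]
    exact mul_le_mul h1 h2 (abs_nonneg _) hC₁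
  have int_ARb : Integrable (fun ω => L (Z ω) * Rb ω) P := by
    refine intb _ (C₁ * (C₃ * |t| ^ 3)) (hA_meas.mul hRb_meas) ?_
    filter_upwards [hA_bd, hRb_bd] with ω h1 h2
    rw [abs_mul]
    exact mul_le_mul h1 h2 (abs_nonneg _) hC₁
  have int_AQ : Integrable (fun ω => L (Z ω) * q (Z ω) (Z ω)) P := by
    refine intb _ (C₁ * C₂) (hA_meas.mul hQ_meas) ?_
    filter_upwards [hA_bd, hQ_bd] with ω h1 h2
    rw [abs_mul]
    exact mul_le_mul h1 h2 (abs_nonneg _) hC₁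
  -- key moment bound : |∫ A h| ≤ C₁ C₃ |t|³
  have EAh_split : (fun ω => L (Z ω) * h ω)
      = fun ω => L (Z ω) * Rb ω + (t ^ 2 / 2) * (L (Z ω) * q (Z ω) (Z ω)) := by
    funext ω
    simp only [hh_def, hRb_def]
    ring
  have hEAh : |∫ ω, L (Z ω) * h ω ∂P| ≤ C₁ * (C₃ * |t| ^ 3) := by
    rw [EAh_split, integral_add int_ARb (int_AQ.const_mul _), integral_const_mul,
      EAQ0, mul_zero, add_zero]
    have := norm_integral_le_of_norm_le_const (μ := P)
      (f := fun ω => L (Z ω) * Rb ω) (C := C₁ * (C₃ * |t| ^ 3)) ?_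
    · simpa [Real.norm_eq_abs, measure_univ] using this
    · filter_upwards [hA_bd, hRb_bd] with ω h1 h2
      rw [Real.norm_eq_abs, abs_mul]
      exact mul_le_mul h1 h2 (abs_nonneg _) hC₁
  have hEh : |∫ ω, h ω ∂P| ≤ B' := by
    have := norm_integral_le_of_norm_le_const (μ := P) (f := h) (C := B')
      (hh_bd.mono fun ω hω => by rwa [Real.norm_eq_abs])
    simpa [Real.norm_eq_abs, measure_univ] using this
  have hEh2 : |∫ ω, h ω ^ 2 ∂P| ≤ B' ^ 2 := by
    have := norm_integral_le_of_norm_le_const (μ := P) (f := fun ω => h ω ^ 2)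
      (C := B' ^ 2) ?_
    · simpa [Real.norm_eq_abs, measure_univ] using this
    · filter_upwards [hh_bd] with ω hω
      rw [Real.norm_eq_abs, abs_pow]
      exact pow_le_pow_left₀ (abs_nonneg _) hω 2
  -- first integral
  have I1 : ∫ ω, f t (Z ω) ∂P = lam0 + ∫ ω, h ω ∂P := by
    have e1 : (fun ω => f t (Z ω)) = fun ω => (lam0 + t * L (Z ω)) + h ω := by
      funext ω
      simp only [hh_def]
      ring
    have intg : Integrable (fun ω => lam0 + t * L (Z ω)) P :=
      (integrable_const lam0).add (intA.const_mul t)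
    rw [e1, integral_add intg int_h,
      integral_add (integrable_const lam0) (intA.const_mul t),
      integral_const, integral_const_mul, EA0]
    simp [measure_univ]
  -- second integral
  have I2 : ∫ ω, (f t (Z ω)) ^ 2 ∂P
      = lam0 ^ 2 + t ^ 2 * (∫ ω, (L (Z ω)) ^ 2 ∂P)
        + 2 * lam0 * (∫ ω, h ω ∂P) + 2 * t * (∫ ω, L (Z ω) * h ω ∂P)
        + ∫ ω, h ω ^ 2 ∂P := by
    have e1 : (fun ω => (f t (Z ω)) ^ 2)
        = fun ω => lam0 ^ 2 + ((2 * lam0 * t) * L (Z ω) + (t ^ 2 * (L (Z ω)) ^ 2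
            + ((2 * lam0) * h ω + ((2 * t) * (L (Z ω) * h ω) + h ω ^ 2)))) := by
      funext ω
      have : f t (Z ω) = (lam0 + t * L (Z ω)) + h ω := by
        simp only [hh_def]; ring
      rw [this]
      ring
    have iS5 : Integrable (fun ω => (2 * t) * (L (Z ω) * h ω) + h ω ^ 2) P :=
      (int_Ah.const_mul _).add int_h2
    have iS4 : Integrable (fun ω => (2 * lam0) * h ω
        + ((2 * t) * (L (Z ω) * h ω) + h ω ^ 2)) P :=
      (int_h.const_mul _).add iS5
    have iS3 : Integrable (fun ω => t ^ 2 * (L (Z ω)) ^ 2 + ((2 * lam0) * h ω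
        + ((2 * t) * (L (Z ω) * h ω) + h ω ^ 2))) P :=
      (int_A2.const_mul _).add iS4
    have iS2 : Integrable (fun ω => (2 * lam0 * t) * L (Z ω)
        + (t ^ 2 * (L (Z ω)) ^ 2 + ((2 * lam0) * h ω
        + ((2 * t) * (L (Z ω) * h ω) + h ω ^ 2)))) P :=
      (intA.const_mul _).add iS3
    rw [e1, integral_add (integrable_const _) iS2,
      integral_add (intA.const_mul _) iS3,
      integral_add (int_A2.const_mul _) iS4,
      integral_add (int_h.const_mul _) iS5,
      integral_add (int_Ah.const_mul _) int_h2,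
      integral_const, integral_const_mul, integral_const_mul, integral_const_mul,
      integral_const_mul, EA0]
    simp [measure_univ]
    ring
  -- put everything together
  have key : ((∫ ω, (f t (Z ω)) ^ 2 ∂P) - (∫ ω, f t (Z ω) ∂P) ^ 2)
      - t ^ 2 * ((∫ ω, (L (Z ω)) ^ 2 ∂P) - (∫ ω, L (Z ω) ∂P) ^ 2)
      = 2 * t * (∫ ω, L (Z ω) * h ω ∂P)
        + ((∫ ω, h ω ^ 2 ∂P) - (∫ ω, h ω ∂P) ^ 2) := by
    rw [I1, I2, EA0]
    ring
  rw [key]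
  have habs4 : |t| ^ 4 = t ^ 4 := by
    rw [← abs_pow]
    exact abs_of_nonneg (by positivity)
  have hB'sq : B' ^ 2 = (C₂ / 2 + C₃ * δ) ^ 2 * t ^ 4 := by
    rw [hB']
    ring
  calc |2 * t * (∫ ω, L (Z ω) * h ω ∂P)
        + ((∫ ω, h ω ^ 2 ∂P) - (∫ ω, h ω ∂P) ^ 2)|
      ≤ |2 * t * (∫ ω, L (Z ω) * h ω ∂P)|
        + |(∫ ω, h ω ^ 2 ∂P) - (∫ ω, h ω ∂P) ^ 2| := abs_add_le _ _
    _ ≤ 2 * |t| * |∫ ω, L (Z ω) * h ω ∂P|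
        + (|∫ ω, h ω ^ 2 ∂P| + |∫ ω, h ω ∂P| ^ 2) := by
        refine add_le_add (le_of_eq ?_) ?_
        · rw [abs_mul, abs_mul]
          norm_num
        · calc |(∫ ω, h ω ^ 2 ∂P) - (∫ ω, h ω ∂P) ^ 2|
              ≤ |∫ ω, h ω ^ 2 ∂P| + |(∫ ω, h ω ∂P) ^ 2| := abs_sub _ _
            _ = |∫ ω, h ω ^ 2 ∂P| + |∫ ω, h ω ∂P| ^ 2 := by rw [abs_pow]
    _ ≤ 2 * |t| * (C₁ * (C₃ * |t| ^ 3)) + (B' ^ 2 + B' ^ 2) := by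
        refine add_le_add ?_ (add_le_add hEh2 ?_)
        · refine mul_le_mul_of_nonneg_left hEAh (by positivity)
        · exact pow_le_pow_left₀ (abs_nonneg _) hEh 2
    _ = (2 * C₁ * C₃ + 2 * (C₂ / 2 + C₃ * δ) ^ 2) * t ^ 4 := by
        rw [hB'sq]
        have h5 : |t| * |t| ^ 3 = t ^ 4 := by rw [← habs4]; ring
        linear_combination 2 * C₁ * C₃ * h5
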